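/- Let α, β ∈ ℕ and n ≥ 2. Then D_x^{α+β+3}[(x-1)^{α+2}(x+1)^{β+2} P_{n-2}^{α+2,β+2}(x)] = 2·(n-1)_{α+β+3}·P_{n-1}^{β+1,α+1}(x). -/

import Mathlib

/-- Pochhammer symbol `(a)_k` for real `a`. -/
noncomputable def poch (a : ℝ) (k : ℕ) : ℝ := (ascPochhammer ℝ k).eval a

/-- The Jacobi polynomial
`P_n^{α,β}(x) = ((α+1)_n / n!) ⬝ ₂F₁(-n, n+α+β+1; α+1; (1-x)/2)`,
written as the terminating hypergeometric sum. -/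
noncomputable def jacobiP (n : ℕ) (a b x : ℝ) : ℝ :=
  (poch (a + 1) n / (Nat.factorial n : ℝ)) *
    ∑ k ∈ Finset.range (n + 1),
      (poch (-(n : ℝ)) k * poch ((n : ℝ) + a + b + 1) k) /
        (poch (a + 1) k * (Nat.factorial k : ℝ)) * ((1 - x) / 2) ^ k

-- basics
lemma poch_zero (a : ℝ) : poch a 0 = 1 := by simp [poch]
lemma poch_succ (a : ℝ) (k : ℕ) : poch a (k+1) = poch a k * (a + k) := by
  simp [poch, ascPochhammer_succ_right]
lemma poch_succ' (a : ℝ) (k : ℕ) : poch a (k+1) = a * poch (a+1) k := by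
  simp [poch, ascPochhammer_succ_left]
lemma poch_add (a : ℝ) (j k : ℕ) : poch a (j+k) = poch a j * poch (a+j) k := by
  have h := congrArg (Polynomial.eval a) (ascPochhammer_mul ℝ j k)
  simpa [poch, Polynomial.eval_mul, Polynomial.eval_comp] using h.symm

lemma poch_pos {a : ℝ} (ha : 0 < a) (k : ℕ) : 0 < poch a k := by
  induction k with
  | zero => simp [poch_zero]
  | succ k ih => rw [poch_succ]; positivity

lemma poch_ne_zero {a : ℝ} (ha : 0 < a) (k : ℕ) : poch a k ≠ 0 := (poch_pos ha k).ne'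

lemma poch_neg_top (m : ℕ) : poch (-(m:ℝ)) (m+1) = 0 := by
  rw [poch_succ]; simp

/-- coefficient of the Jacobi sum -/
noncomputable def jc (m : ℕ) (a b : ℝ) (k : ℕ) : ℝ :=
  (poch (a + 1) m / (Nat.factorial m : ℝ)) *
    ((poch (-(m : ℝ)) k * poch ((m : ℝ) + a + b + 1) k) /
      (poch (a + 1) k * (Nat.factorial k : ℝ)))

/-- denominator-free form -/
noncomputable def jd (m : ℕ) (a b : ℝ) (k : ℕ) : ℝ :=
  poch (-(m : ℝ)) k * poch ((m : ℝ) + a + b + 1) k * poch (a + 1 + k) (m - k) /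
    ((Nat.factorial m : ℝ) * (Nat.factorial k : ℝ))

lemma jc_top (m : ℕ) (a b : ℝ) : jc m a b (m+1) = 0 := by
  simp [jc, poch_neg_top]

lemma jc_eq_jd (m : ℕ) (a b : ℝ) (k : ℕ) (hk : k ≤ m) (ha : 0 ≤ a) :
    jc m a b k = jd m a b k := by
  have h : poch (a+1) m = poch (a+1) k * poch (a+1+k) (m-k) := by
    have := poch_add (a+1) k (m-k)
    rwa [show k + (m-k) = m by omega] at this
  have h1 : poch (a+1) k ≠ 0 := poch_ne_zero (by linarith) k
  have h2 : (Nat.factorial m : ℝ) ≠ 0 := by positivity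
  have h3 : (Nat.factorial k : ℝ) ≠ 0 := by positivity
  rw [jc, jd, h]; field_simp

noncomputable def JS (m : ℕ) (a b : ℝ) (x : ℝ) : ℝ :=
  ∑ k ∈ Finset.range (m+1), jc m a b k * ((1 - x) / 2) ^ k

lemma jacobiP_eq_JS (m : ℕ) (a b x : ℝ) : jacobiP m a b x = JS m a b x := by
  rw [jacobiP, JS, Finset.mul_sum]
  exact Finset.sum_congr rfl fun k _ => by rw [jc]; ring

lemma JS_hasDerivAt (m : ℕ) (a b : ℝ) (x : ℝ) :
    HasDerivAt (fun t => JS m a b t)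
      (∑ k ∈ Finset.range (m+1),
        jc m a b k * ((k : ℝ) * ((1 - x) / 2) ^ (k - 1) * (-1 / 2))) x := by
  apply HasDerivAt.fun_sum
  intro k _
  have h : HasDerivAt (fun t : ℝ => (1 - t) / 2) (-1 / 2) x := by
    simpa using ((hasDerivAt_id x).const_sub 1).div_const 2
  exact (h.pow k).const_mul _

-- two-sided expansion of poch at the top
lemma poch_key (x : ℝ) (j : ℕ) : x * poch (x+1) j = poch x j * (x + j) := by
  have h1 := poch_succ' x j
  have h2 := poch_succ x j
  linarith [h1.symm.trans h2]

/-- (c2₁): `(a+k) ⬝ jc m a b k = (m+a) ⬝ jc m (a-1) (b+1) k` -/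
lemma c21 (m : ℕ) (a b : ℝ) (k : ℕ) (hk : k ≤ m) (ha : 1 ≤ a) :
    (a + k) * jc m a b k = ((m : ℝ) + a) * jc m (a-1) (b+1) k := by
  rw [jc_eq_jd m a b k hk (by linarith), jc_eq_jd m (a-1) (b+1) k hk (by linarith)]
  rw [jd, jd]
  rw [show (m : ℝ) + (a-1) + (b+1) + 1 = (m:ℝ) + a + b + 1 by ring,
      show a - 1 + 1 + (k:ℝ) = a + k by ring]
  have key := poch_key (a + k) (m - k)
  rw [Nat.cast_sub hk] at key
  rw [mul_div_assoc', mul_div_assoc']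
  congr 1
  rw [show a + 1 + (k:ℝ) = (a + k) + 1 by ring]
  linear_combination (poch (-(m:ℝ)) k * poch ((m:ℝ)+a+b+1) k) * key

lemma c22 (m : ℕ) (a b : ℝ) (k : ℕ) (hk : k ≤ m) (ha : 0 ≤ a) :
    (b + k) * jc m a b k - ((k:ℝ)+1) * jc m a b (k+1) = ((m:ℝ) + b) * jc m (a+1) (b-1) k := by
  rcases eq_or_lt_of_le hk with rfl | hlt
  · rw [jc_top, jc_eq_jd k a b k le_rfl ha, jc_eq_jd k (a+1) (b-1) k le_rfl (by linarith)]
    rw [jd, jd, Nat.sub_self, poch_zero, poch_zero,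
        show (k:ℝ) + (a+1) + (b-1) + 1 = (k:ℝ) + a + b + 1 by ring]
    ring
  · obtain ⟨j, rfl⟩ : ∃ j, m = (k+1)+j := ⟨m-k-1, by omega⟩
    rw [jc_eq_jd _ a b k hk ha, jc_eq_jd _ a b (k+1) (by omega) ha,
        jc_eq_jd _ (a+1) (b-1) k hk (by linarith)]
    rw [jd, jd, jd, show k+1+j-k = j+1 by omega, show k+1+j-(k+1) = j by omega,
        Nat.factorial_succ k]
    push_cast
    rw [poch_succ (-((k:ℝ)+1+j)) k, poch_succ ((k:ℝ)+1+(j:ℝ)+a+b+1) k,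
        poch_succ' (a+1+(k:ℝ)) j, poch_succ (a+1+1+(k:ℝ)) j,
        show a+1+((k:ℝ)+1) = a+1+(k:ℝ)+1 by ring,
        show a+1+(k:ℝ)+1 = a+1+1+(k:ℝ) by ring,
        show (k:ℝ)+1+(j:ℝ)+(a+1)+(b-1)+1 = (k:ℝ)+1+(j:ℝ)+a+b+1 by ring]
    have h3 : (Nat.factorial (k+1+j) : ℝ) ≠ 0 := by positivity
    have h4 : (Nat.factorial k : ℝ) ≠ 0 := by positivity
    have h5 : ((k:ℝ)+1) ≠ 0 := by positivity
    field_simp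
    ring

lemma c10 (m : ℕ) (a b : ℝ) (ha : 1 ≤ a) :
    a * jc m a b 0 = ((m:ℝ)+1) * jc (m+1) (a-1) (b-1) 0 := by
  rw [jc_eq_jd m a b 0 (by omega) (by linarith),
      jc_eq_jd (m+1) (a-1) (b-1) 0 (by omega) (by linarith)]
  rw [jd, jd, poch_zero, poch_zero, poch_zero, poch_zero, Nat.sub_zero, Nat.sub_zero,
      Nat.factorial_zero, Nat.factorial_succ m,
      show a - 1 + 1 + (0:ℕ) = a by push_cast; ring,
      show a + 1 + ((0:ℕ):ℝ) = a + 1 by push_cast; ring,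
      poch_succ' a m]
  have h3 : (Nat.factorial m : ℝ) ≠ 0 := by positivity
  have h1 : ((m:ℝ)+1) ≠ 0 := by positivity
  field_simp
  push_cast
  ring

lemma c1s (m : ℕ) (a b : ℝ) (k : ℕ) (hk : k ≤ m) (ha : 1 ≤ a) :
    (a+(k:ℝ)+1) * jc m a b (k+1) - (a+b+k) * jc m a b k
      = ((m:ℝ)+1) * jc (m+1) (a-1) (b-1) (k+1) := by
  rcases eq_or_lt_of_le hk with rfl | hlt
  · rw [jc_top, jc_eq_jd k a b k le_rfl (by linarith),
        jc_eq_jd (k+1) (a-1) (b-1) (k+1) le_rfl (by linarith)]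
    rw [jd, jd, Nat.sub_self, Nat.sub_self, poch_zero, poch_zero,
        Nat.factorial_succ k]
    push_cast
    rw [poch_succ' (-((k:ℝ)+1)) k, show -((k:ℝ)+1)+1 = -(k:ℝ) by ring,
        poch_succ' ((k:ℝ)+1+(a-1)+(b-1)+1) k,
        show (k:ℝ)+1+(a-1)+(b-1)+1 = (k:ℝ)+a+b by ring,
        show (k:ℝ)+a+b+1 = (k:ℝ)+a+b+1 from rfl]
    have h3 : (Nat.factorial k : ℝ) ≠ 0 := by positivity
    have h1 : ((k:ℝ)+1) ≠ 0 := by positivity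
    field_simp
    ring
  · obtain ⟨j, rfl⟩ : ∃ j, m = (k+1)+j := ⟨m-k-1, by omega⟩
    rw [jc_eq_jd _ a b (k+1) (by omega) (by linarith),
        jc_eq_jd _ a b k hk (by linarith),
        jc_eq_jd _ (a-1) (b-1) (k+1) (by omega) (by linarith)]
    rw [jd, jd, jd, show k+1+j-k = j+1 by omega, show k+1+j-(k+1) = j by omega,
        show k+1+j+1-(k+1) = j+1 by omega,
        Nat.factorial_succ (k+1+j), Nat.factorial_succ k]
    push_cast
    rw [poch_succ (-((k:ℝ)+1+j)) k, poch_succ ((k:ℝ)+1+(j:ℝ)+a+b+1) k,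
        poch_succ' (-((k:ℝ)+1+(j:ℝ)+1)) k,
        show -((k:ℝ)+1+(j:ℝ)+1)+1 = -((k:ℝ)+1+(j:ℝ)) by ring,
        poch_succ' ((k:ℝ)+1+(j:ℝ)+1+(a-1)+(b-1)+1) k,
        show (k:ℝ)+1+(j:ℝ)+1+(a-1)+(b-1)+1 = (k:ℝ)+1+(j:ℝ)+a+b by ring,
        show (k:ℝ)+1+(j:ℝ)+a+b+1 = (k:ℝ)+1+(j:ℝ)+a+b+1 from rfl,
        show a-1+1+((k:ℝ)+1) = a+1+(k:ℝ) by ring,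
        poch_succ' (a+1+(k:ℝ)) j,
        show a+1+((k:ℝ)+1) = a+1+(k:ℝ)+1 by ring]
    have h3 : (Nat.factorial (k+1+j) : ℝ) ≠ 0 := by positivity
    have h4 : (Nat.factorial k : ℝ) ≠ 0 := by positivity
    have h5 : ((k:ℝ)+1) ≠ 0 := by positivity
    have h6 : ((k:ℝ)+1+(j:ℝ)+1) ≠ 0 := by positivity
    field_simp
    ring
lemma c3 (m : ℕ) (a b : ℝ) (k : ℕ) (hk : k ≤ m) (ha : 0 ≤ a) :
    ((k:ℝ)+1) * jc (m+1) a b (k+1) = -((m:ℝ)+a+b+2) * jc m (a+1) (b+1) k := by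
  rw [jc_eq_jd (m+1) a b (k+1) (by omega) ha, jc_eq_jd m (a+1) (b+1) k hk (by linarith)]
  rw [jd, jd, Nat.succ_sub_succ, Nat.factorial_succ (m), Nat.factorial_succ (k)]
  push_cast
  rw [poch_succ' (-((m:ℝ)+1)) k, poch_succ' ((m:ℝ)+1+a+b+1) k,
      show -((m:ℝ)+1)+1 = -(m:ℝ) by ring,
      show (m:ℝ)+1+a+b+1+1 = (m:ℝ)+(a+1)+(b+1)+1 by ring,
      show a+1+((k:ℝ)+1) = (a+1)+1+(k:ℝ) by ring]
  have h1 : ((m:ℝ)+1) ≠ 0 := by positivity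
  have h2 : ((k:ℝ)+1) ≠ 0 := by positivity
  have h3 : (Nat.factorial m : ℝ) ≠ 0 := by positivity
  have h4 : (Nat.factorial k : ℝ) ≠ 0 := by positivity
  field_simp
  ring

lemma step3 (m : ℕ) (a b : ℝ) (ha : 0 ≤ a) (x : ℝ) :
    HasDerivAt (fun t => JS (m+1) a b t)
      ((((m:ℝ)+a+b+2)/2) * JS m (a+1) (b+1) x) x := by
  convert JS_hasDerivAt (m+1) a b x using 1
  rw [JS, Finset.mul_sum]
  conv_rhs => rw [Finset.sum_range_succ']
  have h0 : jc (m+1) a b 0 * ((0:ℕ) * ((1-x)/2)^(0-1) * (-1/2)) = 0 := by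
    push_cast; ring
  rw [h0, add_zero]
  refine Finset.sum_congr rfl fun k hk => ?_
  have hk' : k ≤ m := Nat.lt_succ_iff.mp (Finset.mem_range.mp hk)
  have hc := c3 m a b k hk' ha
  rw [Nat.add_sub_cancel]
  push_cast
  linear_combination ((((1-x)/2)^k) / 2) * hc

lemma step21 (m A : ℕ) (b : ℝ) (x : ℝ) :
    HasDerivAt (fun t => (t-1)^(A+1) * JS m ((A:ℝ)+1) b t)
      (((m:ℝ)+(A:ℝ)+1) * ((x-1)^A * JS m (A:ℝ) (b+1) x)) x := by
  have h1 : HasDerivAt (fun t : ℝ => (t-1)^(A+1))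
      ((((A:ℕ)+1 : ℕ) : ℝ) * (x-1)^(A+1-1) * 1) x :=
    ((hasDerivAt_id x).sub_const 1).pow (A+1)
  have h2 := JS_hasDerivAt m ((A:ℝ)+1) b x
  convert h1.mul h2 using 1
  · rfl
  · rfl
  · rfl
  rw [Nat.add_sub_cancel]
  push_cast
  rw [pow_succ]
  have key : ((A:ℝ)+1) * JS m ((A:ℝ)+1) b x
      + (x-1) * (∑ k ∈ Finset.range (m+1),
          jc m ((A:ℝ)+1) b k * ((k:ℝ) * ((1-x)/2)^(k-1) * (-1/2)))
      = ((m:ℝ)+(A:ℝ)+1) * JS m (A:ℝ) (b+1) x := by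
    rw [JS, JS, Finset.mul_sum, Finset.mul_sum, Finset.mul_sum, ← Finset.sum_add_distrib]
    refine Finset.sum_congr rfl fun k hk => ?_
    have hk' : k ≤ m := Nat.lt_succ_iff.mp (Finset.mem_range.mp hk)
    have hc := c21 m ((A:ℝ)+1) b k hk' (by norm_num : (1:ℝ) ≤ (A:ℝ)+1)
    rw [show (A:ℝ)+1-1 = (A:ℝ) by ring] at hc
    rcases k with _ | k
    · push_cast
      simp only [pow_zero]
      linear_combination hc
    · rw [Nat.add_sub_cancel]
      push_cast
      push_cast at hc
      linear_combination (((1-x)/2)^(k+1)) * hc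
  linear_combination (-(x-1)^A) * key

lemma step22 (m B : ℕ) (a : ℝ) (ha : 0 ≤ a) (x : ℝ) :
    HasDerivAt (fun t => (t+1)^(B+1) * JS m a ((B:ℝ)+1) t)
      (((m:ℝ)+(B:ℝ)+1) * ((x+1)^B * JS m (a+1) (B:ℝ) x)) x := by
  have h1 : HasDerivAt (fun t : ℝ => (t+1)^(B+1))
      ((((B:ℕ)+1 : ℕ) : ℝ) * (x+1)^(B+1-1) * 1) x :=
    ((hasDerivAt_id x).add_const 1).pow (B+1)
  have h2 := JS_hasDerivAt m a ((B:ℝ)+1) x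
  convert h1.mul h2 using 1
  · rfl
  · rfl
  · rfl
  rw [Nat.add_sub_cancel]
  push_cast
  rw [pow_succ]
  have hsplit : ∑ k ∈ Finset.range (m+1),
        (x+1) * (jc m a ((B:ℝ)+1) k * ((k:ℝ) * ((1-x)/2)^(k-1) * (-1/2)))
      = (∑ k ∈ Finset.range (m+1), jc m a ((B:ℝ)+1) k * (k:ℝ) * ((1-x)/2)^k)
        - ∑ k ∈ Finset.range (m+1), jc m a ((B:ℝ)+1) k * (k:ℝ) * ((1-x)/2)^(k-1) := by
    rw [← Finset.sum_sub_distrib]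
    refine Finset.sum_congr rfl fun k _ => ?_
    rcases k with _ | k
    · push_cast; ring
    · rw [Nat.add_sub_cancel]; push_cast; ring
  have hshift : ∑ k ∈ Finset.range (m+1), jc m a ((B:ℝ)+1) k * (k:ℝ) * ((1-x)/2)^(k-1)
      = ∑ k ∈ Finset.range (m+1), ((k:ℝ)+1) * jc m a ((B:ℝ)+1) (k+1) * ((1-x)/2)^k := by
    rw [Finset.sum_range_succ']
    conv_rhs => rw [Finset.sum_range_succ]
    rw [jc_top]
    simp only [Nat.add_sub_cancel, Nat.cast_zero, mul_zero, zero_mul, add_zero]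
    refine Finset.sum_congr rfl fun k _ => ?_
    push_cast; ring
  have key : ((B:ℝ)+1) * JS m a ((B:ℝ)+1) x
      + (x+1) * (∑ k ∈ Finset.range (m+1),
          jc m a ((B:ℝ)+1) k * ((k:ℝ) * ((1-x)/2)^(k-1) * (-1/2)))
      = ((m:ℝ)+(B:ℝ)+1) * JS m (a+1) (B:ℝ) x := by
    rw [JS, JS, Finset.mul_sum, Finset.mul_sum, Finset.mul_sum, hsplit, hshift,
        ← Finset.sum_sub_distrib, ← Finset.sum_add_distrib]
    refine Finset.sum_congr rfl fun k hk => ?_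
    have hk' : k ≤ m := Nat.lt_succ_iff.mp (Finset.mem_range.mp hk)
    have hc := c22 m a ((B:ℝ)+1) k hk' ha
    rw [show (B:ℝ)+1-1 = (B:ℝ) by ring] at hc
    linear_combination (((1-x)/2)^k) * hc
  linear_combination (-(x+1)^B) * key

lemma step1 (m A B : ℕ) (x : ℝ) :
    HasDerivAt (fun t => (t-1)^(A+1) * (t+1)^(B+1) * JS m ((A:ℝ)+1) ((B:ℝ)+1) t)
      (2*((m:ℝ)+1) * ((x-1)^A * (x+1)^B * JS (m+1) (A:ℝ) (B:ℝ) x)) x := by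
  have h1 : HasDerivAt (fun t : ℝ => (t-1)^(A+1))
      ((((A:ℕ)+1 : ℕ) : ℝ) * (x-1)^(A+1-1) * 1) x :=
    ((hasDerivAt_id x).sub_const 1).pow (A+1)
  have h2 : HasDerivAt (fun t : ℝ => (t+1)^(B+1))
      ((((B:ℕ)+1 : ℕ) : ℝ) * (x+1)^(B+1-1) * 1) x :=
    ((hasDerivAt_id x).add_const 1).pow (B+1)
  have h3 := JS_hasDerivAt m ((A:ℝ)+1) ((B:ℝ)+1) x
  convert (h1.mul h2).mul h3 using 1
  · rfl
  · rfl
  · rfl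
  rw [Nat.add_sub_cancel, Nat.add_sub_cancel]
  push_cast
  set S : ℝ := ∑ k ∈ Finset.range (m+1),
      jc m ((A:ℝ)+1) ((B:ℝ)+1) k * ((k:ℝ) * ((1-x)/2)^(k-1) * (-1/2)) with hS
  have key : ((A:ℝ)+1)*(x+1)*JS m ((A:ℝ)+1) ((B:ℝ)+1) x
      + ((B:ℝ)+1)*(x-1)*JS m ((A:ℝ)+1) ((B:ℝ)+1) x
      + (x-1)*(x+1)*S
      = 2*((m:ℝ)+1) * JS (m+1) (A:ℝ) (B:ℝ) x := by
    have hLHS : ((A:ℝ)+1)*(x+1)*JS m ((A:ℝ)+1) ((B:ℝ)+1) x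
        + ((B:ℝ)+1)*(x-1)*JS m ((A:ℝ)+1) ((B:ℝ)+1) x
        + (x-1)*(x+1)*S
        = (∑ k ∈ Finset.range (m+1), 2*((A:ℝ)+1+k) * jc m ((A:ℝ)+1) ((B:ℝ)+1) k * ((1-x)/2)^k)
          - ∑ k ∈ Finset.range (m+1), 2*((A:ℝ)+(B:ℝ)+2+(k:ℝ)) * jc m ((A:ℝ)+1) ((B:ℝ)+1) k * ((1-x)/2)^(k+1) := by
      rw [JS, hS, Finset.mul_sum, Finset.mul_sum, Finset.mul_sum,
          ← Finset.sum_add_distrib, ← Finset.sum_add_distrib, ← Finset.sum_sub_distrib]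
      refine Finset.sum_congr rfl fun k _ => ?_
      rcases k with _ | k
      · push_cast; simp only [pow_zero]; ring
      · rw [Nat.add_sub_cancel]; push_cast; ring
    rw [hLHS]
    have hext : (∑ k ∈ Finset.range (m+1), 2*((A:ℝ)+1+k) * jc m ((A:ℝ)+1) ((B:ℝ)+1) k * ((1-x)/2)^k)
        = ∑ k ∈ Finset.range (m+2), 2*((A:ℝ)+1+k) * jc m ((A:ℝ)+1) ((B:ℝ)+1) k * ((1-x)/2)^k := by
      rw [Finset.sum_range_succ (n := m+1), jc_top, mul_zero, zero_mul, add_zero]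
    rw [hext, Finset.sum_range_succ', JS, Finset.mul_sum]
    conv_rhs => rw [Finset.sum_range_succ']
    push_cast
    rw [add_sub_right_comm, ← Finset.sum_sub_distrib]
    have hc0 := c10 m ((A:ℝ)+1) ((B:ℝ)+1) (by norm_num)
    rw [show (A:ℝ)+1-1 = (A:ℝ) by ring, show (B:ℝ)+1-1 = (B:ℝ) by ring] at hc0
    have hsum : ∀ k ∈ Finset.range (m+1),
        2*((A:ℝ)+1+((k:ℝ)+1)) * jc m ((A:ℝ)+1) ((B:ℝ)+1) (k+1) * ((1-x)/2)^(k+1)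
          - 2*((A:ℝ)+(B:ℝ)+2+(k:ℝ)) * jc m ((A:ℝ)+1) ((B:ℝ)+1) k * ((1-x)/2)^(k+1)
        = 2*((m:ℝ)+1) * (jc (m+1) (A:ℝ) (B:ℝ) (k+1) * ((1-x)/2)^(k+1)) := by
      intro k hk
      have hk' : k ≤ m := Nat.lt_succ_iff.mp (Finset.mem_range.mp hk)
      have hc := c1s m ((A:ℝ)+1) ((B:ℝ)+1) k hk' (by norm_num)
      rw [show (A:ℝ)+1-1 = (A:ℝ) by ring, show (B:ℝ)+1-1 = (B:ℝ) by ring] at hc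
      linear_combination (2 * ((1-x)/2)^(k+1)) * hc
    rw [Finset.sum_congr rfl hsum]
    simp only [Nat.cast_zero, pow_zero]
    linear_combination 2 * hc0
  simp only [Pi.mul_apply]
  linear_combination (-(x-1)^A * (x+1)^B) * key

lemma iter_deriv_const_mul (c : ℝ) (j : ℕ) :
    ∀ f : ℝ → ℝ, deriv^[j] (fun x => c * f x) = fun x => c * deriv^[j] f x := by
  induction j with
  | zero => intro f; rfl
  | succ j ih =>
    intro f
    rw [Function.iterate_succ_apply, Function.iterate_succ_apply,
        show deriv (fun x => c * f x) = fun x => c * deriv f x from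
          funext fun x => deriv_const_mul_field c, ih (deriv f)]

lemma chain1 (j : ℕ) : ∀ (m A B : ℕ),
    deriv^[j] (fun t => (t-1)^(A+j) * (t+1)^(B+j) * JS m ((A:ℝ)+(j:ℝ)) ((B:ℝ)+(j:ℝ)) t)
      = fun x => (2^j * poch ((m:ℝ)+1) j) * ((x-1)^A * (x+1)^B * JS (m+j) (A:ℝ) (B:ℝ) x) := by
  induction j with
  | zero =>
    intro m A B
    funext x
    simp [poch_zero]
  | succ j ih =>
    intro m A B
    have hfun : (fun t : ℝ => (t-1)^(A+(j+1)) * (t+1)^(B+(j+1))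
          * JS m ((A:ℝ)+((j:ℕ)+1:ℕ)) ((B:ℝ)+((j:ℕ)+1:ℕ)) t)
        = fun t => (t-1)^((A+j)+1) * (t+1)^((B+j)+1)
          * JS m ((↑(A+j):ℝ)+1) ((↑(B+j):ℝ)+1) t := by
      funext t
      rw [show ((A:ℝ)+(((j:ℕ)+1:ℕ)):ℝ) = (↑(A+j):ℝ)+1 by push_cast; ring,
          show ((B:ℝ)+(((j:ℕ)+1:ℕ)):ℝ) = (↑(B+j):ℝ)+1 by push_cast; ring]
      rfl
    rw [Function.iterate_succ_apply, hfun,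
        show deriv (fun t => (t-1)^((A+j)+1) * (t+1)^((B+j)+1)
            * JS m ((↑(A+j):ℝ)+1) ((↑(B+j):ℝ)+1) t)
          = fun x => (2*((m:ℝ)+1)) * ((x-1)^(A+j) * (x+1)^(B+j)
              * JS (m+1) (↑(A+j):ℝ) (↑(B+j):ℝ) x) from
          funext fun x => (step1 m (A+j) (B+j) x).deriv,
        iter_deriv_const_mul]
    have hfun2 : (fun t : ℝ => (t-1)^(A+j) * (t+1)^(B+j)
          * JS (m+1) (↑(A+j):ℝ) (↑(B+j):ℝ) t)
        = fun t => (t-1)^(A+j) * (t+1)^(B+j) * JS (m+1) ((A:ℝ)+(j:ℝ)) ((B:ℝ)+(j:ℝ)) t := by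
      funext t
      rw [show ((↑(A+j):ℝ)) = (A:ℝ)+(j:ℝ) by push_cast; ring,
          show ((↑(B+j):ℝ)) = (B:ℝ)+(j:ℝ) by push_cast; ring]
    rw [hfun2, ih (m+1) A B]
    funext x
    beta_reduce
    rw [show m+1+j = m+(j+1) by omega, poch_succ' ((m:ℝ)+1) j]
    push_cast
    ring

lemma chain21 (j : ℕ) : ∀ (m A : ℕ) (b : ℝ),
    deriv^[j] (fun t => (t-1)^(A+j) * JS m ((A:ℝ)+(j:ℝ)) b t)
      = fun x => poch ((m:ℝ)+(A:ℝ)+1) j * ((x-1)^A * JS m (A:ℝ) (b+(j:ℝ)) x) := by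
  induction j with
  | zero => intro m A b; funext x; simp [poch_zero]
  | succ j ih =>
    intro m A b
    have hfun : (fun t : ℝ => (t-1)^(A+(j+1)) * JS m ((A:ℝ)+((j:ℕ)+1:ℕ)) b t)
        = fun t => (t-1)^((A+j)+1) * JS m ((↑(A+j):ℝ)+1) b t := by
      funext t
      rw [show ((A:ℝ)+(((j:ℕ)+1:ℕ)):ℝ) = (↑(A+j):ℝ)+1 by push_cast; ring]
      rfl
    rw [Function.iterate_succ_apply, hfun,
        show deriv (fun t => (t-1)^((A+j)+1) * JS m ((↑(A+j):ℝ)+1) b t)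
          = fun x => ((m:ℝ)+(↑(A+j):ℝ)+1) * ((x-1)^(A+j) * JS m (↑(A+j):ℝ) (b+1) x) from
          funext fun x => (step21 m (A+j) b x).deriv,
        iter_deriv_const_mul]
    have hfun2 : (fun t : ℝ => (t-1)^(A+j) * JS m (↑(A+j):ℝ) (b+1) t)
        = fun t => (t-1)^(A+j) * JS m ((A:ℝ)+(j:ℝ)) (b+1) t := by
      funext t
      rw [show ((↑(A+j):ℝ)) = (A:ℝ)+(j:ℝ) by push_cast; ring]
    rw [hfun2, ih m A (b+1)]
    funext x
    beta_reduce
    rw [show b+1+(j:ℝ) = b+(((j:ℕ)+1:ℕ):ℝ) by push_cast; ring,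
        poch_succ ((m:ℝ)+(A:ℝ)+1) j]
    push_cast
    ring

lemma chain22 (j : ℕ) : ∀ (m B : ℕ) (a : ℝ), 0 ≤ a →
    deriv^[j] (fun t => (t+1)^(B+j) * JS m a ((B:ℝ)+(j:ℝ)) t)
      = fun x => poch ((m:ℝ)+(B:ℝ)+1) j * ((x+1)^B * JS m (a+(j:ℝ)) (B:ℝ) x) := by
  induction j with
  | zero => intro m B a _; funext x; simp [poch_zero]
  | succ j ih =>
    intro m B a ha
    have hfun : (fun t : ℝ => (t+1)^(B+(j+1)) * JS m a ((B:ℝ)+((j:ℕ)+1:ℕ)) t)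
        = fun t => (t+1)^((B+j)+1) * JS m a ((↑(B+j):ℝ)+1) t := by
      funext t
      rw [show ((B:ℝ)+(((j:ℕ)+1:ℕ)):ℝ) = (↑(B+j):ℝ)+1 by push_cast; ring]
      rfl
    rw [Function.iterate_succ_apply, hfun,
        show deriv (fun t => (t+1)^((B+j)+1) * JS m a ((↑(B+j):ℝ)+1) t)
          = fun x => ((m:ℝ)+(↑(B+j):ℝ)+1) * ((x+1)^(B+j) * JS m (a+1) (↑(B+j):ℝ) x) from
          funext fun x => (step22 m (B+j) a ha x).deriv,
        iter_deriv_const_mul]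
    have hfun2 : (fun t : ℝ => (t+1)^(B+j) * JS m (a+1) (↑(B+j):ℝ) t)
        = fun t => (t+1)^(B+j) * JS m (a+1) ((B:ℝ)+(j:ℝ)) t := by
      funext t
      rw [show ((↑(B+j):ℝ)) = (B:ℝ)+(j:ℝ) by push_cast; ring]
    rw [hfun2, ih m B (a+1) (by linarith)]
    funext x
    beta_reduce
    rw [show a+1+(j:ℝ) = a+(((j:ℕ)+1:ℕ):ℝ) by push_cast; ring,
        poch_succ ((m:ℝ)+(B:ℝ)+1) j]
    push_cast
    ring

lemma chain3 (i : ℕ) : ∀ (m : ℕ) (a b : ℝ), 0 ≤ a →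
    deriv^[i] (fun t => JS (m+i) a b t)
      = fun x => (poch ((m:ℝ)+(i:ℝ)+a+b+1) i / 2^i) * JS m (a+(i:ℝ)) (b+(i:ℝ)) x := by
  induction i with
  | zero => intro m a b _; funext x; simp [poch_zero]
  | succ i ih =>
    intro m a b ha
    rw [Function.iterate_succ_apply,
        show deriv (fun t => JS (m+(i+1)) a b t)
          = fun x => (((↑(m+i):ℝ)+a+b+2)/2) * JS (m+i) (a+1) (b+1) x from
          funext fun x => (step3 (m+i) a b ha x).deriv,
        iter_deriv_const_mul, ih m (a+1) (b+1) (by linarith)]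
    funext x
    beta_reduce
    rw [show a+1+(i:ℝ) = a+(((i:ℕ)+1:ℕ):ℝ) by push_cast; ring,
        show b+1+(i:ℝ) = b+(((i:ℕ)+1:ℕ):ℝ) by push_cast; ring,
        show (m:ℝ)+(((i:ℕ)+1:ℕ):ℝ)+a+b+1 = ((m:ℝ)+(i:ℝ)+a+b+2) by push_cast; ring,
        poch_succ' ((m:ℝ)+(i:ℝ)+a+b+2) i,
        show (m:ℝ)+(i:ℝ)+a+b+2+1 = (m:ℝ)+(i:ℝ)+(a+1)+(b+1)+1 by ring]
    push_cast
    ring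


/-- `D_x^{α+β+3}[(x-1)^{α+2}(x+1)^{β+2} P_{n-2}^{α+2,β+2}(x)] = 2 (n-1)_{α+β+3} P_{n-1}^{β+1,α+1}(x)`. -/
theorem iterated_deriv_S_inner (α β n : ℕ) (hn : 2 ≤ n) (x : ℝ) :
    deriv^[α + β + 3] (fun t => (t - 1) ^ (α + 2) * (t + 1) ^ (β + 2) *
        jacobiP (n - 2) ((α : ℝ) + 2) ((β : ℝ) + 2) t) x
      = 2 * poch ((n : ℝ) - 1) (α + β + 3) * jacobiP (n - 1) ((β : ℝ) + 1) ((α : ℝ) + 1) x := by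
  obtain ⟨m, rfl⟩ : ∃ m, n = m + 2 := ⟨n - 2, by omega⟩
  rw [show m+2-2 = m by omega, show m+2-1 = m+1 by omega, jacobiP_eq_JS,
      show (fun t => (t - 1) ^ (α + 2) * (t + 1) ^ (β + 2) *
          jacobiP m ((α : ℝ) + 2) ((β : ℝ) + 2) t)
        = fun t => (t - 1) ^ (α + 2) * (t + 1) ^ (β + 2) *
          JS m ((α : ℝ) + 2) ((β : ℝ) + 2) t from
        funext fun t => by rw [jacobiP_eq_JS]]
  rcases le_or_gt β α with hba | hab
  · -- case β ≤ α
    rw [show α+β+3 = (β+1) + ((α-β) + (β+2)) by omega,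
        Function.iterate_add_apply deriv (β+1) ((α-β)+(β+2)),
        Function.iterate_add_apply deriv (α-β) (β+2)]
    have h1 : (fun t : ℝ => (t-1)^((α-β)+(β+2)) * (t+1)^(0+(β+2))
          * JS m ((↑(α-β):ℝ)+(↑(β+2):ℝ)) ((↑(0:ℕ):ℝ)+(↑(β+2):ℝ)) t)
        = fun t => (t - 1) ^ (α + 2) * (t + 1) ^ (β + 2) * JS m ((α:ℝ)+2) ((β:ℝ)+2) t := by
      funext t
      rw [show (α-β)+(β+2) = α+2 by omega, show 0+(β+2) = β+2 by omega,
          show (↑(α-β):ℝ)+(↑(β+2):ℝ) = (α:ℝ)+2 by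
            rw [Nat.cast_sub hba]; push_cast; ring,
          show (↑(0:ℕ):ℝ)+(↑(β+2):ℝ) = (β:ℝ)+2 by push_cast; ring]
    rw [← h1, chain1 (β+2) m (α-β) 0, iter_deriv_const_mul]
    have h2 : (fun t : ℝ => (t-1)^(0+(α-β)) * JS (m+(β+2)) ((↑(0:ℕ):ℝ)+(↑(α-β):ℝ)) ((0:ℕ):ℝ) t)
        = fun t => (t-1)^(α-β) * (t+1)^0 * JS (m+(β+2)) (↑(α-β):ℝ) ((0:ℕ):ℝ) t := by
      funext t
      rw [show (0:ℕ)+(α-β) = α-β by omega,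
          show (↑(0:ℕ):ℝ)+(↑(α-β):ℝ) = (↑(α-β):ℝ) by push_cast; ring]
      ring
    rw [← h2, chain21 (α-β) (m+(β+2)) 0 ((0:ℕ):ℝ), iter_deriv_const_mul]
    have h3 : (fun t : ℝ => JS ((m+1)+(β+1)) ((↑(0:ℕ):ℝ)) (((0:ℕ):ℝ)+(↑(α-β):ℝ)) t)
        = fun t => (t-1)^0 * JS (m+(β+2)) ((0:ℕ):ℝ) (((0:ℕ):ℝ)+(↑(α-β):ℝ)) t := by
      funext t
      rw [show (m+1)+(β+1) = m+(β+2) by omega]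
      ring
    rw [iter_deriv_const_mul, ← h3, chain3 (β+1) (m+1) ((↑(0:ℕ):ℝ)) (((0:ℕ):ℝ)+(↑(α-β):ℝ)) (by norm_num)]
    beta_reduce
    rw [show ((↑(0:ℕ):ℝ)) + (↑(β+1):ℝ) = (β:ℝ)+1 by push_cast; ring,
        show ((↑(0:ℕ):ℝ)+(↑(α-β):ℝ)) + (↑(β+1):ℝ) = (α:ℝ)+1 by
          rw [Nat.cast_sub hba]; push_cast; ring]
    -- now pure constant identity
    rw [show ((↑(m+2):ℝ)-1) = (m:ℝ)+1 by push_cast; ring,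
        show (β+1)+((α-β)+(β+2)) = (β+2)+((α-β)+(β+1)) by omega,
        poch_add ((m:ℝ)+1) (β+2) ((α-β)+(β+1)),
        poch_add ((m:ℝ)+1+(↑(β+2):ℝ)) (α-β) (β+1)]
    rw [show (↑(m+(β+2)):ℝ)+(↑(0:ℕ):ℝ)+1 = (m:ℝ)+1+(↑(β+2):ℝ) by push_cast; ring,
        show (↑(m+1):ℝ)+(↑(β+1):ℝ)+(↑(0:ℕ):ℝ)+((↑(0:ℕ):ℝ)+(↑(α-β):ℝ))+1
            = (m:ℝ)+1+(↑(β+2):ℝ)+(↑(α-β):ℝ) by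
          rw [Nat.cast_sub hba]; push_cast; ring]
    have hpow : (2:ℝ)^(β+2) = 2^(β+1) * 2 := by rw [pow_succ]
    have h2ne : ((2:ℝ)^(β+1)) ≠ 0 := by positivity
    field_simp
    ring
  · -- case α < β
    rw [show α+β+3 = (α+1) + ((β-α) + (α+2)) by omega,
        Function.iterate_add_apply deriv (α+1) ((β-α)+(α+2)),
        Function.iterate_add_apply deriv (β-α) (α+2)]
    have h1 : (fun t : ℝ => (t-1)^(0+(α+2)) * (t+1)^((β-α)+(α+2))
          * JS m ((↑(0:ℕ):ℝ)+(↑(α+2):ℝ)) ((↑(β-α):ℝ)+(↑(α+2):ℝ)) t)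
        = fun t => (t - 1) ^ (α + 2) * (t + 1) ^ (β + 2) * JS m ((α:ℝ)+2) ((β:ℝ)+2) t := by
      funext t
      rw [show (β-α)+(α+2) = β+2 by omega, show 0+(α+2) = α+2 by omega,
          show (↑(β-α):ℝ)+(↑(α+2):ℝ) = (β:ℝ)+2 by
            rw [Nat.cast_sub hab.le]; push_cast; ring,
          show (↑(0:ℕ):ℝ)+(↑(α+2):ℝ) = (α:ℝ)+2 by push_cast; ring]
    rw [← h1, chain1 (α+2) m 0 (β-α), iter_deriv_const_mul]
    have h2 : (fun t : ℝ => (t+1)^(0+(β-α)) * JS (m+(α+2)) ((0:ℕ):ℝ) ((↑(0:ℕ):ℝ)+(↑(β-α):ℝ)) t)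
        = fun t => (t-1)^0 * (t+1)^(β-α) * JS (m+(α+2)) ((0:ℕ):ℝ) (↑(β-α):ℝ) t := by
      funext t
      rw [show (0:ℕ)+(β-α) = β-α by omega,
          show (↑(0:ℕ):ℝ)+(↑(β-α):ℝ) = (↑(β-α):ℝ) by push_cast; ring]
      ring
    rw [← h2, chain22 (β-α) (m+(α+2)) 0 ((0:ℕ):ℝ) (by norm_num), iter_deriv_const_mul]
    have h3 : (fun t : ℝ => JS ((m+1)+(α+1)) (((0:ℕ):ℝ)+(↑(β-α):ℝ)) ((↑(0:ℕ):ℝ)) t)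
        = fun t => (t+1)^0 * JS (m+(α+2)) (((0:ℕ):ℝ)+(↑(β-α):ℝ)) ((0:ℕ):ℝ) t := by
      funext t
      rw [show (m+1)+(α+1) = m+(α+2) by omega]
      ring
    rw [iter_deriv_const_mul, ← h3, chain3 (α+1) (m+1) (((0:ℕ):ℝ)+(↑(β-α):ℝ)) ((↑(0:ℕ):ℝ)) (by positivity)]
    beta_reduce
    rw [show (((0:ℕ):ℝ)+(↑(β-α):ℝ)) + (↑(α+1):ℝ) = (β:ℝ)+1 by
          rw [Nat.cast_sub hab.le]; push_cast; ring,
        show ((↑(0:ℕ):ℝ)) + (↑(α+1):ℝ) = (α:ℝ)+1 by push_cast; ring]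
    rw [show ((↑(m+2):ℝ)-1) = (m:ℝ)+1 by push_cast; ring,
        show (α+1)+((β-α)+(α+2)) = (α+2)+((β-α)+(α+1)) by omega,
        poch_add ((m:ℝ)+1) (α+2) ((β-α)+(α+1)),
        poch_add ((m:ℝ)+1+(↑(α+2):ℝ)) (β-α) (α+1)]
    rw [show (↑(m+(α+2)):ℝ)+(↑(0:ℕ):ℝ)+1 = (m:ℝ)+1+(↑(α+2):ℝ) by push_cast; ring,
        show (↑(m+1):ℝ)+(↑(α+1):ℝ)+(((0:ℕ):ℝ)+(↑(β-α):ℝ))+(↑(0:ℕ):ℝ)+1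
            = (m:ℝ)+1+(↑(α+2):ℝ)+(↑(β-α):ℝ) by
          rw [Nat.cast_sub hab.le]; push_cast; ring]
    have hpow : (2:ℝ)^(α+2) = 2^(α+1) * 2 := by rw [pow_succ]
    have h2ne : ((2:ℝ)^(α+1)) ≠ 0 := by positivity
    field_simp
    ring
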